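/- arXiv:2205.06838 — 2 statements merged into one kernel-verified Lean document; each statement's English description precedes it below -/
import Mathlib

section
/- Let X be a Banach space with Markushevich basis that is C_g-suppression unconditional (‖P_A(x)‖ ≤ C_g‖x‖ and ‖x − P_A(x)‖ ≤ C_g‖x‖ for all finite A) and satisfies C_g-property (A) in the form: α‖1_{εD}‖ ≤ C_g · β‖1_{εE}‖ whenever D, E are disjoint finite sets with |D| ≤ |E|, signs ε_n = sgn(e_n^*(x)), and α ≤ β are the relevant coefficient levels. Then for every τ ∈ (0,1], every x ∈ X, every m ∈ ℕ, and every τ-weak greedy set B of x with |B| = m, one has ‖x − P_B(x)‖ ≤ (C_g⁴/τ + C_g)·σ_m(x), where σ_m(x) = inf{‖x − ∑_{n∈A} a_n e_n‖ : |A| ≤ m, scalars (a_n)}. -/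
open Pointwise

lemma aux_coef {X : Type*} [NormedAddCommGroup X] [NormedSpace ℝ X]
    (e : ℕ → X) (f : ℕ → X →L[ℝ] ℝ)
    (hbi : ∀ i j, f i (e j) = if i = j then (1 : ℝ) else 0)
    (S : Finset ℕ) (c : ℕ → ℝ) (n : ℕ) :
    f n (∑ m ∈ S, c m • e m) = if n ∈ S then c n else 0 := by
  rw [map_sum]
  simp only [map_smul, hbi, smul_eq_mul, mul_ite, mul_one, mul_zero]
  exact Finset.sum_ite_eq S n c

lemma aux_proj_subset {X : Type*} [NormedAddCommGroup X] [NormedSpace ℝ X]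
    (e : ℕ → X) (f : ℕ → X →L[ℝ] ℝ)
    (hbi : ∀ i j, f i (e j) = if i = j then (1 : ℝ) else 0)
    (Cg : ℝ)
    (hproj : ∀ (A : Finset ℕ) (x : X), ‖∑ n ∈ A, f n x • e n‖ ≤ Cg * ‖x‖)
    (S D : Finset ℕ) (hSD : S ⊆ D) (c : ℕ → ℝ) :
    ‖∑ n ∈ S, c n • e n‖ ≤ Cg * ‖∑ n ∈ D, c n • e n‖ := by
  have h := hproj S (∑ n ∈ D, c n • e n)
  have heq : ∑ n ∈ S, f n (∑ m ∈ D, c m • e m) • e n = ∑ n ∈ S, c n • e n := by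
    refine Finset.sum_congr rfl fun n hn => ?_
    rw [aux_coef e f hbi, if_pos (hSD hn)]
  rwa [heq] at h

lemma aux_mem_hull {X : Type*} [NormedAddCommGroup X] [NormedSpace ℝ X]
    (e : ℕ → X) (c : ℕ → ℝ) (D : Finset ℕ) (t : ℕ → ℝ)
    (ht : ∀ n ∈ D, 0 ≤ t n ∧ t n ≤ 1) :
    (∑ n ∈ D, (t n * c n) • e n) ∈
      convexHull ℝ {w : X | ∃ S : Finset ℕ, S ⊆ D ∧ w = ∑ n ∈ S, c n • e n} := by
  classical
  induction D using Finset.induction_on with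
  | empty =>
    apply subset_convexHull
    exact ⟨∅, by simp⟩
  | @insert a D' ha ih =>
    have htD' : ∀ n ∈ D', 0 ≤ t n ∧ t n ≤ 1 := fun n hn => ht n (Finset.mem_insert_of_mem hn)
    have hw' := ih htD'
    set K : Set X := {w : X | ∃ S : Finset ℕ, S ⊆ insert a D' ∧ w = ∑ n ∈ S, c n • e n}
    have hmono : {w : X | ∃ S : Finset ℕ, S ⊆ D' ∧ w = ∑ n ∈ S, c n • e n} ⊆ K := by
      rintro w ⟨S, hS, rfl⟩
      exact ⟨S, hS.trans (Finset.subset_insert a D'), rfl⟩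
    have hw'K : (∑ n ∈ D', (t n * c n) • e n) ∈ convexHull ℝ K :=
      convexHull_mono hmono hw'
    have hshift : (c a • e a + ∑ n ∈ D', (t n * c n) • e n) ∈ convexHull ℝ K := by
      have : ({c a • e a} : Set X) + {w : X | ∃ S : Finset ℕ, S ⊆ D' ∧ w = ∑ n ∈ S, c n • e n} ⊆ K := by
        rintro w ⟨v, hv, w', ⟨S, hS, rfl⟩, rfl⟩
        rw [Set.mem_singleton_iff] at hv
        subst hv
        refine ⟨insert a S, Finset.insert_subset_insert a hS, ?_⟩
        rw [Finset.sum_insert (fun hmem => ha (hS hmem))]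
      have h2 : (c a • e a + ∑ n ∈ D', (t n * c n) • e n) ∈
          convexHull ℝ (({c a • e a} : Set X) + {w : X | ∃ S : Finset ℕ, S ⊆ D' ∧ w = ∑ n ∈ S, c n • e n}) := by
        rw [convexHull_add, convexHull_singleton]
        exact Set.add_mem_add rfl hw'
      exact convexHull_mono this h2
    have hcombo := (convex_convexHull ℝ K) hw'K hshift
      (by linarith [(ht a (Finset.mem_insert_self a D')).2] : (0:ℝ) ≤ 1 - t a)
      (ht a (Finset.mem_insert_self a D')).1 (by ring)
    rw [Finset.sum_insert ha]
    convert hcombo using 1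
    simp only [smul_add, smul_smul]
    module

lemma aux_mult {X : Type*} [NormedAddCommGroup X] [NormedSpace ℝ X]
    (e : ℕ → X) (f : ℕ → X →L[ℝ] ℝ)
    (hbi : ∀ i j, f i (e j) = if i = j then (1 : ℝ) else 0)
    (Cg : ℝ)
    (hproj : ∀ (A : Finset ℕ) (x : X), ‖∑ n ∈ A, f n x • e n‖ ≤ Cg * ‖x‖)
    (D : Finset ℕ) (t c : ℕ → ℝ)
    (ht : ∀ n ∈ D, 0 ≤ t n ∧ t n ≤ 1) :
    ‖∑ n ∈ D, (t n * c n) • e n‖ ≤ Cg * ‖∑ n ∈ D, c n • e n‖ := by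
  have hmem := aux_mem_hull e c D t ht
  have hsub : {w : X | ∃ S : Finset ℕ, S ⊆ D ∧ w = ∑ n ∈ S, c n • e n} ⊆
      Metric.closedBall (0 : X) (Cg * ‖∑ n ∈ D, c n • e n‖) := by
    rintro w ⟨S, hS, rfl⟩
    rw [mem_closedBall_zero_iff]
    exact aux_proj_subset e f hbi Cg hproj S D hS c
  have := convexHull_min hsub (convex_closedBall _ _) hmem
  rwa [mem_closedBall_zero_iff] at this

/-- Theorem 6.5 (Konyagin–Temlyakov): a greedy basis
(suppression unconditional + property (A)) is
`(C_g⁴/τ + C_g, τ)`-greedy. -/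
theorem stmt_18
    {X : Type*} [NormedAddCommGroup X] [NormedSpace ℝ X] [CompleteSpace X]
    (e : ℕ → X) (f : ℕ → X →L[ℝ] ℝ)
    (hbi : ∀ i j, f i (e j) = if i = j then (1 : ℝ) else 0)
    (htotal : ∀ x : X, (∀ n, f n x = 0) → x = 0)
    (hdense : Dense (Submodule.span ℝ (Set.range e) : Set X))
    (Cg : ℝ) (hCg1 : 1 ≤ Cg)
    (hproj : ∀ (A : Finset ℕ) (x : X), ‖∑ n ∈ A, f n x • e n‖ ≤ Cg * ‖x‖)
    (hsupp : ∀ (A : Finset ℕ) (x : X),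
      ‖x - ∑ n ∈ A, f n x • e n‖ ≤ Cg * ‖x‖)
    (hA : ∀ (D E : Finset ℕ), Disjoint D E → D.card ≤ E.card →
      ∀ ε δ : ℕ → ℝ, (∀ n ∈ D, |ε n| = 1) → (∀ n ∈ E, |δ n| = 1) →
      ∀ α β : ℝ, 0 ≤ α → α ≤ β →
      α * ‖∑ n ∈ D, ε n • e n‖ ≤ Cg * (β * ‖∑ n ∈ E, δ n • e n‖)) :
    ∀ (τ : ℝ), 0 < τ → τ ≤ 1 →
      ∀ (x : X) (m : ℕ) (B : Finset ℕ), B.card = m →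
      (∀ i ∈ B, ∀ j ∉ B, τ * |f j x| ≤ |f i x|) →
      ∀ (A : Finset ℕ) (a : ℕ → ℝ), A.card ≤ m →
      ‖x - ∑ n ∈ B, f n x • e n‖
        ≤ (Cg ^ 4 / τ + Cg) * ‖x - ∑ n ∈ A, a n • e n‖ := by
  classical
  intro τ hτ hτ1 x m B hBcard hgreedy A a hAcard
  have hCg0 : (0:ℝ) < Cg := lt_of_lt_of_le one_pos hCg1
  set c : ℕ → ℝ := fun n => f n x with hc
  set y : X := x - ∑ n ∈ A, a n • e n with hy
  -- coefficients of y
  have hfy : ∀ n, f n y = c n - (if n ∈ A then a n else 0) := by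
    intro n
    simp only [hy, map_sub, aux_coef e f hbi, hc]
  -- cardinality
  have hcard : (A \ B).card ≤ (B \ A).card := by
    have h1 := Finset.card_sdiff_add_card_inter A B
    have h2 := Finset.card_sdiff_add_card_inter B A
    have h3 : (A ∩ B).card = (B ∩ A).card := by rw [Finset.inter_comm]
    have h4 : A.card ≤ B.card := by rw [hBcard]; exact hAcard
    omega
  -- x - P_{A∪B} x = y - P_{A∪B} y
  have hsum2 : ∑ n ∈ A ∪ B, (if n ∈ A then a n else 0) • e n = ∑ n ∈ A, a n • e n := by
    simp only [ite_smul, zero_smul]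
    rw [Finset.sum_ite_mem, Finset.union_inter_cancel_left]
  have key1 : y - ∑ n ∈ A ∪ B, f n y • e n = x - ∑ n ∈ A ∪ B, c n • e n := by
    have h5 : ∑ n ∈ A ∪ B, f n y • e n
        = ∑ n ∈ A ∪ B, c n • e n - ∑ n ∈ A, a n • e n := by
      simp only [hfy, sub_smul]
      rw [Finset.sum_sub_distrib, hsum2]
    rw [h5, hy]
    abel
  have bound1 : ‖x - ∑ n ∈ A ∪ B, c n • e n‖ ≤ Cg * ‖y‖ := by
    rw [← key1]; exact hsupp (A ∪ B) y
  -- decomposition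
  have hsplit : ∑ n ∈ A ∪ B, c n • e n
      = ∑ n ∈ B, c n • e n + ∑ n ∈ A \ B, c n • e n := by
    rw [← Finset.sum_union Finset.disjoint_sdiff, Finset.union_sdiff_self_eq_union,
      Finset.union_comm]
  have hdecomp : x - ∑ n ∈ B, c n • e n
      = (x - ∑ n ∈ A ∪ B, c n • e n) + ∑ n ∈ A \ B, c n • e n := by
    rw [hsplit]; abel
  -- core bound on the extra term
  have bound2 : ‖∑ n ∈ A \ B, c n • e n‖ ≤ Cg ^ 4 / τ * ‖y‖ := by
    rcases Finset.eq_empty_or_nonempty (A \ B) with hD | hD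
    · rw [hD]
      simp only [Finset.sum_empty, norm_zero]
      have : (0:ℝ) ≤ Cg ^ 4 / τ := by positivity
      exact mul_nonneg this (norm_nonneg _)
    · have hE : (B \ A).Nonempty := by
        rw [← Finset.card_pos] at hD ⊢
        omega
      set D : Finset ℕ := A \ B
      set E : Finset ℕ := B \ A
      set α : ℝ := D.sup' hD (fun n => |c n|) with hα
      set β : ℝ := E.inf' hE (fun n => |c n|) with hβ
      obtain ⟨j0, hj0, hj0eq⟩ := D.exists_mem_eq_sup' hD (fun n => |c n|)
      obtain ⟨i0, hi0, hi0eq⟩ := E.exists_mem_eq_inf' hE (fun n => |c n|)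
      have hj0B : j0 ∉ B := (Finset.mem_sdiff.mp hj0).2
      have hi0B : i0 ∈ B := (Finset.mem_sdiff.mp hi0).1
      have hαeq : α = |c j0| := hα.trans hj0eq
      have hβeq : β = |c i0| := hβ.trans hi0eq
      have hβα : τ * α ≤ β := by
        rw [hαeq, hβeq]
        exact hgreedy i0 hi0B j0 hj0B
      have hα0 : 0 ≤ α := by rw [hαeq]; exact abs_nonneg _
      rcases eq_or_lt_of_le hα0 with hαz | hαpos
      · -- all coefficients on D vanish
        have : ∑ n ∈ D, c n • e n = 0 := by
          apply Finset.sum_eq_zero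
          intro n hn
          have h1 : |c n| ≤ α := Finset.le_sup' (fun n => |c n|) hn
          have : c n = 0 := by
            rw [← hαz] at h1
            exact abs_eq_zero.mp (le_antisymm h1 (abs_nonneg _))
          rw [this, zero_smul]
        rw [this, norm_zero]
        have : (0:ℝ) ≤ Cg ^ 4 / τ := by positivity
        exact mul_nonneg this (norm_nonneg _)
      · have hβpos : 0 < β := lt_of_lt_of_le (by positivity) hβα
        set ε : ℕ → ℝ := fun n => if c n < 0 then -1 else 1 with hε
        have hε1 : ∀ n, |ε n| = 1 := by
          intro n
          simp only [hε]
          split <;> simp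
        have hεc : ∀ n, ε n * |c n| = c n := by
          intro n
          simp only [hε]
          rcases lt_or_ge (c n) 0 with h | h
          · rw [if_pos h, abs_of_neg h]; ring
          · rw [if_neg (not_lt.mpr h), abs_of_nonneg h, one_mul]
        -- step 1: flatten up
        have s1 : ‖∑ n ∈ D, c n • e n‖ ≤ Cg * (α * ‖∑ n ∈ D, ε n • e n‖) := by
          have ht : ∀ n ∈ D, 0 ≤ |c n| / α ∧ |c n| / α ≤ 1 := by
            intro n hn
            constructor
            · positivity
            · rw [div_le_one hαpos]
              exact Finset.le_sup' (fun n => |c n|) hn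
          have h := aux_mult e f hbi Cg hproj D (fun n => |c n| / α) (fun n => α * ε n) ht
          have hl : ∑ n ∈ D, ((|c n| / α) * (α * ε n)) • e n = ∑ n ∈ D, c n • e n := by
            refine Finset.sum_congr rfl fun n _ => ?_
            congr 1
            have hαne : α ≠ 0 := ne_of_gt hαpos
            field_simp
            linear_combination hεc n
          have hr : ∑ n ∈ D, (α * ε n) • e n = α • ∑ n ∈ D, ε n • e n := by
            rw [Finset.smul_sum]
            exact Finset.sum_congr rfl fun n _ => (smul_smul α (ε n) (e n)).symm
          rw [hl, hr, norm_smul, Real.norm_eq_abs, abs_of_pos hαpos] at h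
          exact h
        -- step 2: property (A)
        have s2 : (τ * α) * ‖∑ n ∈ D, ε n • e n‖ ≤ Cg * (β * ‖∑ n ∈ E, ε n • e n‖) :=
          hA D E disjoint_sdiff_sdiff hcard ε ε (fun n _ => hε1 n)
            (fun n _ => hε1 n) (τ * α) β (by positivity) hβα
        -- step 3: flatten down
        have s3 : β * ‖∑ n ∈ E, ε n • e n‖ ≤ Cg * ‖∑ n ∈ E, c n • e n‖ := by
          have hcE : ∀ n ∈ E, β ≤ |c n| := fun n hn => Finset.inf'_le (fun n => |c n|) hn
          have ht : ∀ n ∈ E, 0 ≤ β / |c n| ∧ β / |c n| ≤ 1 := by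
            intro n hn
            have h0 : 0 < |c n| := lt_of_lt_of_le hβpos (hcE n hn)
            exact ⟨by positivity, by rw [div_le_one h0]; exact hcE n hn⟩
          have h := aux_mult e f hbi Cg hproj E (fun n => β / |c n|) c ht
          have hl : ∑ n ∈ E, ((β / |c n|) * c n) • e n = β • ∑ n ∈ E, ε n • e n := by
            rw [Finset.smul_sum]
            refine Finset.sum_congr rfl fun n hn => ?_
            have h0 : |c n| ≠ 0 := ne_of_gt (lt_of_lt_of_le hβpos (hcE n hn))
            rw [smul_smul]
            congr 1
            field_simp
            linear_combination -hεc n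
          rw [hl, norm_smul, Real.norm_eq_abs, abs_of_pos hβpos] at h
          exact h
        -- step 4: P_E x = P_E y
        have s4 : ‖∑ n ∈ E, c n • e n‖ ≤ Cg * ‖y‖ := by
          have h := hproj E y
          have heq : ∑ n ∈ E, f n y • e n = ∑ n ∈ E, c n • e n := by
            refine Finset.sum_congr rfl fun n hn => ?_
            have hnA : n ∉ A := (Finset.mem_sdiff.mp hn).2
            rw [hfy n, if_neg hnA, sub_zero]
          rwa [heq] at h
        -- combine
        calc ‖∑ n ∈ D, c n • e n‖
            ≤ Cg * (α * ‖∑ n ∈ D, ε n • e n‖) := s1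
          _ = (Cg / τ) * ((τ * α) * ‖∑ n ∈ D, ε n • e n‖) := by
              field_simp
          _ ≤ (Cg / τ) * (Cg * (β * ‖∑ n ∈ E, ε n • e n‖)) :=
              mul_le_mul_of_nonneg_left s2 (by positivity)
          _ = (Cg * Cg / τ) * (β * ‖∑ n ∈ E, ε n • e n‖) := by ring
          _ ≤ (Cg * Cg / τ) * (Cg * ‖∑ n ∈ E, c n • e n‖) :=
              mul_le_mul_of_nonneg_left s3 (by positivity)
          _ = (Cg * Cg * Cg / τ) * ‖∑ n ∈ E, c n • e n‖ := by ring
          _ ≤ (Cg * Cg * Cg / τ) * (Cg * ‖y‖) :=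
              mul_le_mul_of_nonneg_left s4 (by positivity)
          _ = Cg ^ 4 / τ * ‖y‖ := by ring
  -- final combination
  show ‖x - ∑ n ∈ B, c n • e n‖ ≤ (Cg ^ 4 / τ + Cg) * ‖y‖
  calc ‖x - ∑ n ∈ B, c n • e n‖
      = ‖(x - ∑ n ∈ A ∪ B, c n • e n) + ∑ n ∈ A \ B, c n • e n‖ := by rw [← hdecomp]
    _ ≤ ‖x - ∑ n ∈ A ∪ B, c n • e n‖ + ‖∑ n ∈ A \ B, c n • e n‖ := norm_add_le _ _
    _ ≤ Cg * ‖y‖ + Cg ^ 4 / τ * ‖y‖ := add_le_add bound1 bound2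
    _ = (Cg ^ 4 / τ + Cg) * ‖y‖ := by ring
end

section
/- Let X be a Banach space with Markushevich basis, τ ∈ (0,1]. Suppose the basis is C_ℓ-suppression quasi-greedy with respect to τ-weak greedy sets (‖x − P_Λ(x)‖ ≤ C_ℓ‖x‖ for all τ-weak greedy sets Λ of x) and is C_sc-super-conservative: ‖1_{δB}‖ ≤ C_sc‖1_{εA}‖ whenever |A| = |B| and max B < min A. Then the basis has (τ C_ℓ + C_sc + C_ℓ C_sc)-left property (A, τ): for all x with ‖x‖_∞ ≤ 1/τ, finite sets A, B with |A| = |B|, max B < min A, A, B, supp(x) pairwise disjoint, and signs (ε), (δ), one has ‖τx + 1_{δB}‖ ≤ (τ C_ℓ + C_sc + C_ℓ C_sc)‖x + 1_{εA}‖. -/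
/-- Lemma 4.10 (upper bound): a `(C_ℓ, τ)`-quasi-greedy and
`C_sc`-super-conservative basis has
`(τC_ℓ + C_sc + C_ℓC_sc)`-left property (A, τ). -/
theorem stmt_19
    {X : Type*} [NormedAddCommGroup X] [NormedSpace ℝ X] [CompleteSpace X]
    (e : ℕ → X) (f : ℕ → X →L[ℝ] ℝ)
    (hbi : ∀ i j, f i (e j) = if i = j then (1 : ℝ) else 0)
    (htotal : ∀ x : X, (∀ n, f n x = 0) → x = 0)
    (hdense : Dense (Submodule.span ℝ (Set.range e) : Set X))
    (τ : ℝ) (hτ : 0 < τ) (hτ1 : τ ≤ 1)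
    (Cl Csc : ℝ)
    (hCl : ∀ (x : X) (Λ : Finset ℕ),
      (∀ i ∈ Λ, ∀ j ∉ Λ, τ * |f j x| ≤ |f i x|) →
      ‖x - ∑ n ∈ Λ, f n x • e n‖ ≤ Cl * ‖x‖)
    (hCsc : ∀ (A B : Finset ℕ), A.card = B.card →
      (∀ i ∈ B, ∀ j ∈ A, i < j) →
      ∀ ε δ : ℕ → ℝ, (∀ n ∈ A, |ε n| = 1) → (∀ n ∈ B, |δ n| = 1) →
      ‖∑ n ∈ B, δ n • e n‖ ≤ Csc * ‖∑ n ∈ A, ε n • e n‖) :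
    ∀ (x : X), (∀ n, |f n x| ≤ 1 / τ) →
      ∀ (A B : Finset ℕ), A.card = B.card →
      (∀ i ∈ B, ∀ j ∈ A, i < j) →
      (∀ n ∈ A, f n x = 0) → (∀ n ∈ B, f n x = 0) → Disjoint A B →
      ∀ ε δ : ℕ → ℝ, (∀ n ∈ A, |ε n| = 1) → (∀ n ∈ B, |δ n| = 1) →
      ‖τ • x + ∑ n ∈ B, δ n • e n‖
        ≤ (τ * Cl + Csc + Cl * Csc) * ‖x + ∑ n ∈ A, ε n • e n‖ := by
  -- basic positivity facts
  have he0 : e 0 ≠ 0 := by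
    intro h
    have := hbi 0 0
    rw [h] at this
    simp at this
  have he0' : (0 : ℝ) < ‖e 0‖ := norm_pos_iff.mpr he0
  have he1 : e 1 ≠ 0 := by
    intro h
    have := hbi 1 1
    rw [h] at this
    simp at this
  have he1' : (0 : ℝ) < ‖e 1‖ := norm_pos_iff.mpr he1
  have hCl0 : (0 : ℝ) ≤ Cl := by
    have h := hCl (e 0) ∅ (by intro i hi; simp at hi)
    simp at h
    nlinarith
  have hCsc0 : (0 : ℝ) ≤ Csc := by
    have h := hCsc {1} {0} rfl (by intro i hi j hj; simp at hi hj; omega)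
      (fun _ => 1) (fun _ => 1) (by intro n _; simp) (by intro n _; simp)
    simp at h
    nlinarith
  intro x hx A B hcard hBA hxA hxB hdisj ε δ hε hδ
  set y := x + ∑ n ∈ A, ε n • e n with hy
  -- coordinates of y
  have hfy : ∀ i, f i y = f i x + (if i ∈ A then ε i else 0) := by
    intro i
    rw [hy, map_add, map_sum]
    congr 1
    have : ∀ n ∈ A, f i (ε n • e n) = if i = n then ε n else 0 := by
      intro n _
      rw [map_smul, hbi]
      simp [mul_ite]
    rw [Finset.sum_congr rfl this, Finset.sum_ite_eq]
  -- A is a τ-weak greedy set of y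
  have hgreedy : ∀ i ∈ A, ∀ j ∉ A, τ * |f j y| ≤ |f i y| := by
    intro i hi j hj
    rw [hfy i, hfy j, if_pos hi, if_neg hj, hxA i hi, zero_add, add_zero]
    have h1 : |f j x| ≤ 1 / τ := hx j
    have h2 : |ε i| = 1 := hε i hi
    rw [h2]
    calc τ * |f j x| ≤ τ * (1 / τ) := by
          apply mul_le_mul_of_nonneg_left h1 hτ.le
      _ = 1 := by field_simp
  have key := hCl y A hgreedy
  have hsum : ∑ n ∈ A, f n y • e n = ∑ n ∈ A, ε n • e n := by
    apply Finset.sum_congr rfl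
    intro n hn
    rw [hfy n, if_pos hn, hxA n hn, zero_add]
  rw [hsum] at key
  have hyx : y - ∑ n ∈ A, ε n • e n = x := by rw [hy]; abel
  rw [hyx] at key
  -- key : ‖x‖ ≤ Cl * ‖y‖
  have hB := hCsc A B hcard hBA ε δ hε hδ
  have hnormA : ‖∑ n ∈ A, ε n • e n‖ ≤ ‖y‖ + ‖x‖ := by
    have : (∑ n ∈ A, ε n • e n) = y - x := by rw [hy]; abel
    rw [this]
    exact norm_sub_le _ _
  have h1 : ‖τ • x + ∑ n ∈ B, δ n • e n‖ ≤ τ * ‖x‖ + ‖∑ n ∈ B, δ n • e n‖ := by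
    calc ‖τ • x + ∑ n ∈ B, δ n • e n‖ ≤ ‖τ • x‖ + ‖∑ n ∈ B, δ n • e n‖ :=
          norm_add_le _ _
      _ = τ * ‖x‖ + ‖∑ n ∈ B, δ n • e n‖ := by
          rw [norm_smul, Real.norm_eq_abs, abs_of_pos hτ]
  have hyn : (0 : ℝ) ≤ ‖y‖ := norm_nonneg _
  nlinarith [mul_le_mul_of_nonneg_left hnormA hCsc0]
end
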